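/- Let d ≥ 1 and M > 0. There exists a constant C > 0 depending only on d and M such that the following holds. Let u : ℝ × ℝ^d → ℝ be twice continuously differentiable with all partial derivatives (jointly in time and space) of order ≤ 2 bounded in absolute value by M. Let A ∈ ℝ^{d×d} be symmetric and β ∈ ℝ^d with all entries bounded in absolute value by M; let μ ∈ (0, M] and γ̄, c̄, ḡ, ψ̄ ∈ [−M, M]. Let z ∈ ℝ^d, let n ∈ ℝ^d be a unit vector, and let t ∈ ℝ. Assume: (PDE at (t,z)) ∂_t u(t,z) + 𝒜_{A,β}u(t,·)(z) + c̄ u(t,z) + ḡ = 0, and (sticky boundary relation at (t,z)) −μ 𝒜_{A,β}u(t,·)(z) + ∇_x u(t,z)·n + γ̄ u(t,z) = ψ̄. Then for every r ∈ (0,1], Y_k > 0 and Z_k ∈ ℝ, setting Y_{k+1} := Y_k(1 + rγ̄ + rμc̄) and Z_{k+1} := Z_k − rψ̄ Y_k + rμḡ Y_k, one has |u(t + μr, z)·Y_{k+1} + Z_{k+1} − u(t, z − rn)·Y_k − Z_k| ≤ C r² Y_k. -/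

import Mathlib

set_option maxHeartbeats 1600000



variable {E : Type*} [NormedAddCommGroup E] [NormedSpace ℝ E]

lemma norm_fderiv_fderiv_eq (f : E → ℝ) (x : E) :
    ‖fderiv ℝ (fderiv ℝ f) x‖ = ‖iteratedFDeriv ℝ 2 f x‖ := by
  rw [show (2:ℕ) = 1 + 1 from rfl, ← norm_iteratedFDeriv_fderiv,
    ← norm_iteratedFDeriv_fderiv, norm_iteratedFDeriv_zero]

lemma norm_fderiv_eq_one (f : E → ℝ) (x : E) :
    ‖fderiv ℝ f x‖ = ‖iteratedFDeriv ℝ 1 f x‖ := by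
  rw [show (1:ℕ) = 0 + 1 from rfl, ← norm_iteratedFDeriv_fderiv, norm_iteratedFDeriv_zero]

lemma lip_fderiv {f : E → ℝ} {M : ℝ} (hf : ContDiff ℝ 2 f)
    (hb : ∀ x, ‖iteratedFDeriv ℝ 2 f x‖ ≤ M) (p q : E) :
    ‖fderiv ℝ f q - fderiv ℝ f p‖ ≤ M * ‖q - p‖ := by
  have hdf : Differentiable ℝ (fderiv ℝ f) :=
    (hf.fderiv_right (m := 1) (by norm_num)).differentiable (by norm_num)
  exact convex_univ.norm_image_sub_le_of_norm_fderiv_le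
    (fun x _ => (hdf x))
    (fun x _ => by rw [norm_fderiv_fderiv_eq]; exact hb x) trivial trivial

lemma lip_self {f : E → ℝ} {M : ℝ} (hf : ContDiff ℝ 2 f)
    (hb : ∀ x, ‖iteratedFDeriv ℝ 1 f x‖ ≤ M) (p q : E) :
    ‖f q - f p‖ ≤ M * ‖q - p‖ := by
  have hd : Differentiable ℝ f := hf.differentiable (by norm_num)
  exact convex_univ.norm_image_sub_le_of_norm_fderiv_le
    (fun x _ => hd x)
    (fun x _ => by rw [norm_fderiv_eq_one]; exact hb x) trivial trivial

lemma taylor_one {f : E → ℝ} {M : ℝ} (hf : ContDiff ℝ 2 f)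
    (hb : ∀ x, ‖iteratedFDeriv ℝ 2 f x‖ ≤ M) (p w : E) :
    ‖f (p + w) - f p - fderiv ℝ f p w‖ ≤ M * ‖w‖ ^ 2 := by
  have hM : 0 ≤ M := le_trans (norm_nonneg _) (hb p)
  have hd : Differentiable ℝ f := hf.differentiable (by norm_num)
  have key := Convex.norm_image_sub_le_of_norm_fderiv_le'
    (s := segment ℝ p (p + w)) (φ := fderiv ℝ f p) (C := M * ‖w‖)
    (f := f) (x := p) (y := p + w)
    (fun x _ => hd x)
    (fun x hx => by
      refine le_trans (lip_fderiv hf hb p x) ?_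
      have h1 := dist_add_dist_of_mem_segment hx
      have h2 : dist p (p + w) = ‖w‖ := by simp [dist_eq_norm]
      have h3 : dist p x = ‖x - p‖ := by rw [dist_comm, dist_eq_norm]
      have h4 : (0:ℝ) ≤ dist x (p + w) := dist_nonneg
      have h5 : ‖x - p‖ ≤ ‖w‖ := by linarith
      exact mul_le_mul_of_nonneg_left h5 hM)
    (convex_segment _ _) (left_mem_segment _ _ _) (right_mem_segment _ _ _)
  have h6 : p + w - p = w := by abel
  rw [h6] at key
  calc ‖f (p + w) - f p - fderiv ℝ f p w‖ ≤ M * ‖w‖ * ‖w‖ := key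
    _ = M * ‖w‖ ^ 2 := by ring

/-- The second-order differential operator
`𝒜_{A,β} v (y) = (1/2) ∑_{i,j} A i j ∂²v/∂yᵢ∂yⱼ (y) + ∑ i, β i ∂v/∂yᵢ (y)`. -/
noncomputable def stickyGen {d : ℕ} (A : Matrix (Fin d) (Fin d) ℝ) (β : Fin d → ℝ)
    (v : (Fin d → ℝ) → ℝ) (y : Fin d → ℝ) : ℝ :=
  (1 / 2) * ∑ i, ∑ j, A i j *
      iteratedFDeriv ℝ 2 v y ![Pi.single i 1, Pi.single j 1]
    + ∑ i, β i * fderiv ℝ v y (Pi.single i 1)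

/-- Lemma 5.2: boundary one-step error estimate for the projected Euler method for
sticky diffusions.  The chain at `z - rn` (outside the domain, at distance `r` from
the boundary) is projected to the boundary point `z` along the inward unit normal `n`,
time advances by the sticky amount `μr`, and `Y`, `Z` receive boundary increments. -/
theorem projected_euler_boundary_one_step (d : ℕ) (hd : 1 ≤ d) (M : ℝ) (hM : 0 < M) :
    ∃ C : ℝ, 0 < C ∧
      ∀ u : ℝ × (Fin d → ℝ) → ℝ, ContDiff ℝ 2 u →
      (∀ m : ℕ, m ≤ 2 → ∀ p : ℝ × (Fin d → ℝ), ‖iteratedFDeriv ℝ m u p‖ ≤ M) →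
      ∀ A : Matrix (Fin d) (Fin d) ℝ, A.IsSymm → (∀ i j, |A i j| ≤ M) →
      ∀ β : Fin d → ℝ, (∀ i, |β i| ≤ M) →
      ∀ μ : ℝ, 0 < μ → μ ≤ M →
      ∀ γ c g ψ : ℝ, |γ| ≤ M → |c| ≤ M → |g| ≤ M → |ψ| ≤ M →
      ∀ z n : Fin d → ℝ, (∑ i, (n i) ^ 2 = 1) →
      ∀ t : ℝ,
      -- the parabolic PDE holds at (t, z)
      (deriv (fun τ => u (τ, z)) t + stickyGen A β (fun y => u (t, y)) z
          + c * u (t, z) + g = 0) →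
      -- the sticky (second-order) boundary relation holds at (t, z)
      (-μ * stickyGen A β (fun y => u (t, y)) z
          + fderiv ℝ (fun y => u (t, y)) z n + γ * u (t, z) = ψ) →
      ∀ r : ℝ, 0 < r → r ≤ 1 →
      ∀ Yk Zk : ℝ, 0 < Yk →
      |u (t + μ * r, z) * (Yk * (1 + r * γ + r * μ * c))
          + (Zk - r * ψ * Yk + r * μ * g * Yk)
          - u (t, z - r • n) * Yk - Zk|
        ≤ C * r ^ 2 * Yk := by
  refine ⟨M ^ 3 + M + (M + M * M) * (M * M) + 1, by positivity, ?_⟩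
  intro u hu hub A hAs hAb β hβb μ hμ0 hμM γ c g ψ hγ hc hg hψ z n hn t hPDE hBC
    r hr0 hr1 Yk Zk hYk
  have hdiff : Differentiable ℝ u := hu.differentiable (by norm_num)
  set Du := fderiv ℝ u (t, z) with hDu
  -- time derivative identity
  have hderiv : deriv (fun τ => u (τ, z)) t = Du (1, 0) := by
    have hg1 : HasDerivAt (fun τ : ℝ => ((τ, z) : ℝ × (Fin d → ℝ))) (1, 0) t :=
      HasDerivAt.prodMk (hasDerivAt_id t) (hasDerivAt_const t z)
    exact ((hdiff (t, z)).hasFDerivAt.comp_hasDerivAt t hg1).deriv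
  -- space derivative identity
  have hfd : fderiv ℝ (fun y => u (t, y)) z n = Du (0, n) := by
    have hg2 : HasFDerivAt (fun y : Fin d → ℝ => ((t, y) : ℝ × (Fin d → ℝ)))
        ((0 : (Fin d → ℝ) →L[ℝ] ℝ).prod (ContinuousLinearMap.id ℝ _)) z :=
      HasFDerivAt.prodMk (hasFDerivAt_const t z) (hasFDerivAt_id z)
    have h := ((hdiff (t, z)).hasFDerivAt.comp z hg2).fderiv
    rw [show (fun y => u (t, y)) = u ∘ Prod.mk t from rfl, h]
    rfl
  -- combined first-order relation
  have E0 : μ * Du (1, 0) + Du (0, n) + (γ + μ * c) * u (t, z) + μ * g - ψ = 0 := by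
    rw [hderiv] at hPDE
    rw [hfd] at hBC
    nlinarith [hPDE, hBC]
  -- linearity facts
  have e1 : Du (μ * r, 0) = (μ * r) * Du (1, 0) := by
    have : ((μ * r, 0) : ℝ × (Fin d → ℝ)) = (μ * r) • ((1, 0) : ℝ × (Fin d → ℝ)) := by
      simp [Prod.ext_iff]
    rw [this, map_smul, smul_eq_mul]
  have e2 : Du (0, -(r • n)) = (-r) * Du (0, n) := by
    have : ((0, -(r • n)) : ℝ × (Fin d → ℝ)) = (-r) • ((0, n) : ℝ × (Fin d → ℝ)) := by
      simp [Prod.ext_iff, neg_smul]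
    rw [this, map_smul, smul_eq_mul]
  -- norm computations
  have hnorm1 : ‖((μ * r, 0) : ℝ × (Fin d → ℝ))‖ = μ * r := by
    rw [Prod.norm_def]
    simp only [norm_zero, Real.norm_eq_abs, abs_mul, abs_of_pos hμ0, abs_of_pos hr0]
    exact max_eq_left (by positivity)
  have hni : ∀ i, |n i| ≤ 1 := by
    intro i
    have h1 : n i ^ 2 ≤ 1 := by
      rw [← hn]
      exact Finset.single_le_sum (fun j _ => sq_nonneg (n j)) (Finset.mem_univ i)
    nlinarith [abs_nonneg (n i), sq_abs (n i)]
  have hnn : ‖n‖ ≤ 1 := by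
    rw [pi_norm_le_iff_of_nonneg zero_le_one]
    intro i; rw [Real.norm_eq_abs]; exact hni i
  have hnorm2 : ‖((0, -(r • n)) : ℝ × (Fin d → ℝ))‖ ≤ r := by
    rw [Prod.norm_def]
    simp only [norm_zero, norm_neg, norm_smul, Real.norm_eq_abs, abs_of_pos hr0]
    rw [max_le_iff]
    constructor
    · linarith
    · nlinarith
  -- Taylor estimates
  have hT1 : ‖u ((t, z) + (μ * r, 0)) - u (t, z) - Du (μ * r, 0)‖
      ≤ M * ‖((μ * r, 0) : ℝ × (Fin d → ℝ))‖ ^ 2 :=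
    taylor_one hu (hub 2 le_rfl) (t, z) (μ * r, 0)
  have hT2 : ‖u ((t, z) + (0, -(r • n))) - u (t, z) - Du (0, -(r • n))‖
      ≤ M * ‖((0, -(r • n)) : ℝ × (Fin d → ℝ))‖ ^ 2 :=
    taylor_one hu (hub 2 le_rfl) (t, z) (0, -(r • n))
  have hpt1 : ((t, z) + (μ * r, 0) : ℝ × (Fin d → ℝ)) = (t + μ * r, z) := by
    simp [Prod.mk_add_mk]
  have hpt2 : ((t, z) + (0, -(r • n)) : ℝ × (Fin d → ℝ)) = (t, z - r • n) := by
    simp [Prod.mk_add_mk, sub_eq_add_neg]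
  rw [hpt1] at hT1
  rw [hpt2] at hT2
  -- Lipschitz estimate for T3
  have hT3 : ‖u (t + μ * r, z) - u (t, z)‖ ≤ M * (μ * r) := by
    have := lip_self hu (hub 1 (by norm_num)) (t, z) (t + μ * r, z)
    have hq : ((t + μ * r, z) - (t, z) : ℝ × (Fin d → ℝ)) = (μ * r, 0) := by
      simp [Prod.mk_sub_mk]
    rw [hq, hnorm1] at this
    exact this
  -- bound norms
  have hμr : μ * r ≤ M * r := by nlinarith
  have hB1 : ‖u (t + μ * r, z) - u (t, z) - Du (μ * r, 0)‖ ≤ M * (M * r) ^ 2 := by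
    refine hT1.trans ?_
    rw [hnorm1]
    have h7 : (μ * r) ^ 2 ≤ (M * r) ^ 2 :=
      pow_le_pow_left₀ (by positivity) hμr 2
    exact mul_le_mul_of_nonneg_left h7 hM.le
  have hB2 : ‖u (t, z - r • n) - u (t, z) - Du (0, -(r • n))‖ ≤ M * r ^ 2 := by
    refine hT2.trans ?_
    have h0 : (0:ℝ) ≤ ‖((0, -(r • n)) : ℝ × (Fin d → ℝ))‖ := norm_nonneg _
    exact mul_le_mul_of_nonneg_left (pow_le_pow_left₀ h0 hnorm2 2) hM.le
  have hB3 : ‖u (t + μ * r, z) - u (t, z)‖ ≤ M * (M * r) := by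
    refine hT3.trans ?_
    nlinarith
  -- put it together
  set F := u (t + μ * r, z) * (1 + r * γ + r * μ * c) - r * ψ + r * μ * g
      - u (t, z - r • n) with hF
  have hfactor : u (t + μ * r, z) * (Yk * (1 + r * γ + r * μ * c))
      + (Zk - r * ψ * Yk + r * μ * g * Yk)
      - u (t, z - r • n) * Yk - Zk = F * Yk := by
    rw [hF]; ring
  rw [hfactor, abs_mul, abs_of_pos hYk]
  have hsplit : F = (u (t + μ * r, z) - u (t, z) - Du (μ * r, 0))
      - (u (t, z - r • n) - u (t, z) - Du (0, -(r • n)))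
      + r * (γ + μ * c) * (u (t + μ * r, z) - u (t, z))
      + r * (μ * Du (1, 0) + Du (0, n) + (γ + μ * c) * u (t, z) + μ * g - ψ) := by
    rw [hF, e1, e2]; ring
  have hFb : |F| ≤ (M ^ 3 + M + (M + M * M) * (M * M) + 1) * r ^ 2 := by
    rw [hsplit, E0, mul_zero, add_zero]
    have habs : |r * (γ + μ * c) * (u (t + μ * r, z) - u (t, z))|
        ≤ r * (M + M * M) * (M * (M * r)) := by
      rw [abs_mul, abs_mul, abs_of_pos hr0]
      have h1 : |γ + μ * c| ≤ M + M * M := by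
        have := abs_add_le γ (μ * c)
        have h2 : |μ * c| ≤ M * M := by
          rw [abs_mul, abs_of_pos hμ0]
          nlinarith [abs_nonneg c]
        linarith
      have h3 : |u (t + μ * r, z) - u (t, z)| ≤ M * (M * r) := by
        rw [← Real.norm_eq_abs]; exact hB3
      have h4 : (0:ℝ) ≤ |u (t + μ * r, z) - u (t, z)| := abs_nonneg _
      have h5 : (0:ℝ) ≤ |γ + μ * c| := abs_nonneg _
      calc r * |γ + μ * c| * |u (t + μ * r, z) - u (t, z)|
          ≤ (r * (M + M * M)) * (M * (M * r)) := by
            refine mul_le_mul ?_ h3 h4 (by positivity)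
            exact mul_le_mul_of_nonneg_left h1 hr0.le
        _ = r * (M + M * M) * (M * (M * r)) := by ring
    have t1 := hB1
    have t2 := hB2
    rw [Real.norm_eq_abs] at t1 t2
    have := abs_add_le ((u (t + μ * r, z) - u (t, z) - Du (μ * r, 0))
        - (u (t, z - r • n) - u (t, z) - Du (0, -(r • n))))
      (r * (γ + μ * c) * (u (t + μ * r, z) - u (t, z)))
    have hsub := abs_sub (u (t + μ * r, z) - u (t, z) - Du (μ * r, 0))
      (u (t, z - r • n) - u (t, z) - Du (0, -(r • n)))
    have hgoal : M * (M * r) ^ 2 + M * r ^ 2 + r * (M + M * M) * (M * (M * r))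
        ≤ (M ^ 3 + M + (M + M * M) * (M * M) + 1) * r ^ 2 := by
      nlinarith [sq_nonneg r]
    linarith [this, hsub, t1, t2, habs, hgoal]
  calc |F| * Yk ≤ ((M ^ 3 + M + (M + M * M) * (M * M) + 1) * r ^ 2) * Yk :=
      mul_le_mul_of_nonneg_right hFb hYk.le
    _ = (M ^ 3 + M + (M + M * M) * (M * M) + 1) * r ^ 2 * Yk := by ring
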